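/- In the noiseless case, for every sorted probability distribution p_1 ≥ ⋯ ≥ p_N ≥ 0 and every k ≥ 0, the optimal guessing time after asking k truthfully-answered yes/no questions (equivalently, after learning which of 2^k disjoint parts contains X) satisfies 2^{−k}·(G(X) − 1/2) + 1/2 ≤ G_opt^{(k)}(X) ≤ 2^{−k}·(G(X) − 1) + 1. -/

import Mathlib

open Finset

noncomputable def guess (N : ℕ) (q : Fin N → ℝ) : ℝ :=
  Finset.univ.inf' ⟨1, Finset.mem_univ 1⟩
    (fun σ : Equiv.Perm (Fin N) => ∑ k : Fin N, ((k : ℝ) + 1) * q (σ k))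

noncomputable def guessA (N : ℕ) (q : Fin N → ℝ) (p : ℝ) (A : Finset (Fin N)) : ℝ :=
  ∑ y : Bool, Finset.univ.inf' ⟨1, Finset.mem_univ 1⟩
    (fun σ : Equiv.Perm (Fin N) => ∑ k : Fin N,
      ((k : ℝ) + 1) * q (σ k) * (if ((σ k ∈ A) ↔ (y = true)) then 1 - p else p))

noncomputable def guessOpt (N : ℕ) (q : Fin N → ℝ) (p : ℝ) : ℝ :=
  Finset.univ.inf' ⟨∅, Finset.mem_univ ∅⟩ (fun A : Finset (Fin N) => guessA N q p A)

def zigzag (N : ℕ) : Finset (Fin N) := Finset.univ.filter (fun k => (k : ℕ) % 2 = 0)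

noncomputable def wt (N : ℕ) (q : Fin N → ℝ) (p : ℝ) (i j : Fin N) : ℝ :=
  max 0 ((1 - p) * min (q i) (q j) - p * max (q i) (q j))

noncomputable def cut (N : ℕ) (q : Fin N → ℝ) (p : ℝ) (A : Finset (Fin N)) : ℝ :=
  ∑ i ∈ A, ∑ j ∈ Aᶜ, wt N q p i j

noncomputable def maxcut (N : ℕ) (q : Fin N → ℝ) (p : ℝ) : ℝ :=
  Finset.univ.sup' ⟨∅, Finset.mem_univ ∅⟩ (fun A : Finset (Fin N) => cut N q p A)

noncomputable def guessOptK (N k : ℕ) (q : Fin N → ℝ) : ℝ :=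
  Finset.univ.inf' ⟨fun _ => ⟨0, by positivity⟩, Finset.mem_univ _⟩
    (fun f : Fin N → Fin (2 ^ k) =>
      ∑ m : Fin (2 ^ k), Finset.univ.inf' ⟨1, Finset.mem_univ 1⟩
        (fun σ : Equiv.Perm (Fin N) =>
          ∑ j : Fin N, ((j : ℝ) + 1) * q (σ j) * (if f (σ j) = m then 1 else 0)))

private lemma aux7_abel (N : ℕ) (Q c : ℕ → ℝ) (hQa : ∀ n, Q (n + 1) ≤ Q n)
    (hQ0 : ∀ n, 0 ≤ Q n) (hS : ∀ n, n ≤ N → 0 ≤ ∑ i ∈ Finset.range n, c i) :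
    0 ≤ ∑ i ∈ Finset.range N, Q i * c i := by
  have key : ∀ n, n ≤ N → Q n * (∑ i ∈ Finset.range n, c i) ≤ ∑ i ∈ Finset.range n, Q i * c i := by
    intro n
    induction n with
    | zero => simp
    | succ n ih =>
      intro hn
      have h1 := ih (by omega)
      have h2 := hS (n + 1) hn
      rw [Finset.sum_range_succ] at h2 ⊢
      rw [Finset.sum_range_succ (fun i => Q i * c i)]
      nlinarith [hQa n, mul_nonneg (sub_nonneg.2 (hQa n)) h2]
  have h := key N le_rfl
  nlinarith [hS N le_rfl, hQ0 N, mul_nonneg (hQ0 N) (hS N le_rfl)]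

private lemma aux7_floor_sum (M : ℕ) (hM : 0 < M) : ∀ n : ℕ,
    2 * (M : ℤ) * (∑ i ∈ Finset.range n, ((i / M : ℕ) : ℤ))
      = (n : ℤ) * n - n * M + (n % M : ℕ) * ((M : ℤ) - (n % M : ℕ)) := by
  intro n
  induction n with
  | zero => simp
  | succ n ih =>
    have hd : M * (n / M) + n % M = n := Nat.div_add_mod n M
    have hdZ : (M : ℤ) * ((n / M : ℕ) : ℤ) + ((n % M : ℕ) : ℤ) = (n : ℤ) := by exact_mod_cast hd
    rw [Finset.sum_range_succ, mul_add, ih]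
    by_cases h : n % M + 1 = M
    · have hn1 : n + 1 = M * (n / M + 1) := by rw [Nat.mul_add, Nat.mul_one]; omega
      have h1 : (n + 1) % M = 0 := by rw [hn1]; exact Nat.mul_mod_right _ _
      have hZ : ((n % M : ℕ) : ℤ) + 1 = (M : ℤ) := by exact_mod_cast h
      rw [h1]
      simp only [Nat.cast_add, Nat.cast_one, Nat.cast_zero]
      linear_combination (2 : ℤ) * hdZ - (((n % M : ℕ) : ℤ) + 1) * hZ
    · have hlt : n % M < M := Nat.mod_lt _ hM
      have hn1 : n + 1 = M * (n / M) + (n % M + 1) := by omega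
      have h1 : (n + 1) % M = n % M + 1 := by
        rw [hn1, Nat.mul_add_mod]; exact Nat.mod_eq_of_lt (by omega)
      rw [h1]
      simp only [Nat.cast_add, Nat.cast_one, Nat.cast_zero]
      linear_combination (2 : ℤ) * hdZ

private lemma aux7_tail (N : ℕ) (q : Fin N → ℝ) (hnn : ∀ i, 0 ≤ q i)
    (hsort : ∀ i j : Fin N, i ≤ j → q j ≤ q i) (c : ℕ) (S : Finset (Fin N))
    (hcard : N - c ≤ S.card) :
    ∑ i ∈ Finset.univ.filter (fun i : Fin N => c ≤ (i : ℕ)), q i ≤ ∑ i ∈ S, q i := by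
  classical
  set T : Finset (Fin N) := Finset.univ.filter (fun i : Fin N => c ≤ (i : ℕ)) with hT
  have hTmem : ∀ i : Fin N, i ∈ T ↔ c ≤ (i : ℕ) := by
    intro i; simp [hT]
  -- card of T is at most N - c
  have hTcard : T.card ≤ N - c := by
    have := Finset.card_le_card_of_injOn (fun i : Fin N => (i : ℕ) - c)
      (s := T) (t := Finset.range (N - c))
      (by intro a ha; rw [Finset.mem_coe, hTmem] at ha
          simp only [Finset.mem_coe, Finset.mem_range]; have := a.2; omega)
      (by intro a ha b hb hab
          simp only [Finset.mem_coe, hTmem] at ha hb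
          have hab' : (a : ℕ) - c = (b : ℕ) - c := hab
          apply Fin.ext; omega)
    simpa using this
  have hdiff : (T \ S).card ≤ (S \ T).card := by
    have h1 : (T \ S).card + (T ∩ S).card = T.card := Finset.card_sdiff_add_card_inter T S
    have h2 : (S \ T).card + (S ∩ T).card = S.card := Finset.card_sdiff_add_card_inter S T
    have h3 : (T ∩ S).card = (S ∩ T).card := by rw [Finset.inter_comm]
    omega
  have key : ∑ i ∈ T \ S, q i ≤ ∑ i ∈ S \ T, q i := by
    rcases Finset.eq_empty_or_nonempty (T \ S) with h | h
    · rw [h, Finset.sum_empty]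
      exact Finset.sum_nonneg fun i _ => hnn i
    · obtain ⟨x0, hx0⟩ := h
      have hcN : c < N := by
        have hx0T : x0 ∈ T := (Finset.mem_sdiff.1 hx0).1
        rw [hTmem] at hx0T
        have := x0.2; omega
      set i0 : Fin N := ⟨c, hcN⟩ with hi0
      have hub : ∑ i ∈ T \ S, q i ≤ (T \ S).card • q i0 := by
        apply Finset.sum_le_card_nsmul
        intro x hx
        have hxT : x ∈ T := (Finset.mem_sdiff.1 hx).1
        rw [hTmem] at hxT
        exact hsort i0 x (by simp [hi0, Fin.le_def]; omega)
      have hlb : (S \ T).card • q i0 ≤ ∑ i ∈ S \ T, q i := by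
        apply Finset.card_nsmul_le_sum
        intro x hx
        have hxT : x ∉ T := (Finset.mem_sdiff.1 hx).2
        rw [hTmem] at hxT
        exact hsort x i0 (by simp [hi0, Fin.le_def]; omega)
      have hmid : (T \ S).card • q i0 ≤ (S \ T).card • q i0 := by
        simp only [nsmul_eq_mul]
        apply mul_le_mul_of_nonneg_right _ (hnn i0)
        exact_mod_cast Nat.cast_le.2 hdiff
      linarith
  have e1 : ∑ i ∈ T, q i = ∑ i ∈ T ∩ S, q i + ∑ i ∈ T \ S, q i :=
    (Finset.sum_inter_add_sum_sdiff T S q).symm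
  have e2 : ∑ i ∈ S, q i = ∑ i ∈ S ∩ T, q i + ∑ i ∈ S \ T, q i :=
    (Finset.sum_inter_add_sum_sdiff S T q).symm
  have e3 : ∑ i ∈ T ∩ S, q i = ∑ i ∈ S ∩ T, q i := by rw [Finset.inter_comm]
  linarith

private lemma aux7_layer (N : ℕ) (q : Fin N → ℝ) (A : Fin N → ℕ) (hA : ∀ i, A i ≤ N) :
    ∑ i, (A i : ℝ) * q i
      = ∑ t ∈ Finset.Icc 1 N, ∑ i ∈ Finset.univ.filter (fun i : Fin N => t ≤ A i), q i := by
  classical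
  have step : ∀ t, ∑ i ∈ Finset.univ.filter (fun i : Fin N => t ≤ A i), q i
      = ∑ i : Fin N, if t ≤ A i then q i else 0 := by
    intro t; rw [Finset.sum_filter]
  simp_rw [step]
  rw [Finset.sum_comm]
  apply Finset.sum_congr rfl
  intro i _
  have hfilt : (Finset.Icc 1 N).filter (fun t => t ≤ A i) = Finset.Icc 1 (A i) := by
    ext t
    simp only [Finset.mem_filter, Finset.mem_Icc]
    constructor
    · rintro ⟨⟨h1, _⟩, h2⟩; exact ⟨h1, h2⟩
    · rintro ⟨h1, h2⟩; exact ⟨⟨h1, h2.trans (hA i)⟩, h2⟩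
  rw [← Finset.sum_filter, hfilt, Finset.sum_const, Nat.card_Icc]
  simp [nsmul_eq_mul, mul_comm]

private lemma aux7_count (N M : ℕ) (W : Fin N → ℕ) (f : Fin N → Fin M)
    (hW1 : ∀ i, 1 ≤ W i)
    (hinj : ∀ a b, f a = f b → W a = W b → a = b) (t : ℕ) (ht : 1 ≤ t) :
    N - (t - 1) * M ≤ (Finset.univ.filter (fun i : Fin N => t ≤ W i)).card := by
  classical
  have h2 : (Finset.univ.filter (fun i : Fin N => t ≤ W i)).card
      + (Finset.univ.filter (fun i => ¬ t ≤ W i)).card = N := by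
    rw [Finset.card_filter_add_card_filter_not]
    simp
  have h1 : (Finset.univ.filter (fun i : Fin N => ¬ t ≤ W i)).card ≤ M * (t - 1) := by
    rw [Finset.card_eq_sum_card_fiberwise (f := f) (t := Finset.univ)
      (fun x _ => Finset.mem_univ (f x))]
    calc ∑ m : Fin M, ((Finset.univ.filter (fun i : Fin N => ¬ t ≤ W i)).filter
          (fun i => f i = m)).card
        ≤ ∑ _m : Fin M, (t - 1) := by
          apply Finset.sum_le_sum
          intro m _
          have := Finset.card_le_card_of_injOn W
            (s := (Finset.univ.filter (fun i : Fin N => ¬ t ≤ W i)).filter (fun i => f i = m))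
            (t := Finset.Icc 1 (t - 1))
            (by intro a ha
                simp only [Finset.mem_coe, Finset.mem_filter, Finset.mem_univ, true_and] at ha
                simp only [Finset.mem_coe, Finset.mem_Icc]
                exact ⟨hW1 a, by omega⟩)
            (by intro a ha b hb hab
                simp only [Finset.mem_coe, Finset.mem_filter] at ha hb
                exact hinj a b (ha.2.trans hb.2.symm) hab)
          simpa [Nat.card_Icc] using this
      _ = M * (t - 1) := by simp [Finset.sum_const, Finset.card_univ, mul_comm]
  have h1' : (Finset.univ.filter (fun i : Fin N => ¬ t ≤ W i)).card ≤ (t - 1) * M := by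
    rw [mul_comm]; exact h1
  generalize hKg : (t - 1) * M = K at h1' ⊢
  omega

private lemma aux7_lower_core (N M : ℕ) (hM : 0 < M) (q : Fin N → ℝ)
    (hnn : ∀ i, 0 ≤ q i) (hsort : ∀ i j : Fin N, i ≤ j → q j ≤ q i)
    (W : Fin N → ℕ) (hW1 : ∀ i, 1 ≤ W i) (hWN : ∀ i, W i ≤ N)
    (f : Fin N → Fin M) (hinj : ∀ a b, f a = f b → W a = W b → a = b) :
    ∑ i : Fin N, ((((i : ℕ) / M : ℕ) : ℝ) + 1) * q i ≤ ∑ i : Fin N, (W i : ℝ) * q i := by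
  classical
  have hR : ∀ i : Fin N, (i : ℕ) / M + 1 ≤ N := by
    intro i
    have h1 := Nat.div_le_self (i : ℕ) M
    have h2 := i.2
    omega
  have hL : ∑ i : Fin N, ((((i : ℕ) / M : ℕ) : ℝ) + 1) * q i
      = ∑ i : Fin N, ((((i : ℕ) / M + 1 : ℕ) : ℝ)) * q i := by
    apply Finset.sum_congr rfl; intro i _; push_cast; ring
  rw [hL, aux7_layer N q (fun i => (i : ℕ) / M + 1) hR, aux7_layer N q W hWN]
  apply Finset.sum_le_sum
  intro t ht
  rw [Finset.mem_Icc] at ht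
  have hfilt : Finset.univ.filter (fun i : Fin N => t ≤ (i : ℕ) / M + 1)
      = Finset.univ.filter (fun i : Fin N => (t - 1) * M ≤ (i : ℕ)) := by
    ext i
    simp only [Finset.mem_filter, Finset.mem_univ, true_and]
    constructor
    · intro h
      have h' : t - 1 ≤ (i : ℕ) / M := by omega
      exact (Nat.le_div_iff_mul_le hM).1 h'
    · intro h
      have h' : t - 1 ≤ (i : ℕ) / M := (Nat.le_div_iff_mul_le hM).2 h
      omega
  rw [hfilt]
  exact aux7_tail N q hnn hsort ((t - 1) * M) _
    (aux7_count N M W f hW1 hinj t ht.1)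

private lemma aux7_guess_eq (N : ℕ) (hN : 1 ≤ N) (q : Fin N → ℝ)
    (hsort : ∀ i j : Fin N, i ≤ j → q j ≤ q i) :
    guess N q = ∑ i : Fin N, ((i : ℝ) + 1) * q i := by
  unfold guess
  have hanti : Antivary (fun i : Fin N => (i : ℝ) + 1) q := by
    intro i j hij
    have h : ¬ i ≤ j := fun h => absurd (hsort i j h) (not_le.2 hij)
    have hji : j ≤ i := le_of_not_ge h
    have : (j : ℕ) ≤ (i : ℕ) := Fin.le_def.1 hji
    simp only [add_le_add_iff_right, Nat.cast_le]
    exact_mod_cast this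
  apply le_antisymm
  · refine le_trans (Finset.inf'_le _ (Finset.mem_univ (1 : Equiv.Perm (Fin N)))) ?_
    exact le_of_eq (Finset.sum_congr rfl (fun k _ => by simp))
  · apply Finset.le_inf'
    intro σ _
    exact hanti.sum_mul_le_sum_mul_comp_perm (σ := σ)

private lemma aux7_V_lb (N M : ℕ) (hM : 0 < M) (q : Fin N → ℝ) (hnn : ∀ i, 0 ≤ q i)
    (hsum : ∑ i, q i = 1) (hsort : ∀ i j : Fin N, i ≤ j → q j ≤ q i) :
    ((M : ℝ))⁻¹ * ((∑ i : Fin N, ((i : ℝ) + 1) * q i) - 1 / 2) + 1 / 2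
      ≤ ∑ i : Fin N, ((((i : ℕ) / M : ℕ) : ℝ) + 1) * q i := by
  classical
  have hMR : (0 : ℝ) < (M : ℝ) := by exact_mod_cast hM
  set Q : ℕ → ℝ := fun n => if h : n < N then q ⟨n, h⟩ else 0 with hQdef
  set c : ℕ → ℝ := fun n =>
    (((n / M : ℕ) : ℝ) + 1) - (((n : ℝ) + 1) / M + ((M : ℝ) - 1) / (2 * M)) with hcdef
  have hQa : ∀ n, Q (n + 1) ≤ Q n := by
    intro n
    by_cases h1 : n + 1 < N
    · have h2 : n < N := by omega
      simp only [hQdef, dif_pos h1, dif_pos h2]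
      exact hsort ⟨n, h2⟩ ⟨n + 1, h1⟩ (by simp [Fin.le_def])
    · by_cases h2 : n < N
      · simp only [hQdef, dif_neg h1, dif_pos h2]
        exact hnn _
      · simp [hQdef, dif_neg h1, dif_neg h2]
  have hQ0 : ∀ n, 0 ≤ Q n := by
    intro n
    by_cases h : n < N
    · simp only [hQdef, dif_pos h]; exact hnn _
    · simp [hQdef, dif_neg h]
  have hGauss : ∀ n : ℕ, ∑ i ∈ Finset.range n, ((i : ℝ) + 1) = (n : ℝ) * (n + 1) / 2 := by
    intro n
    induction n with
    | zero => simp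
    | succ n ih => rw [Finset.sum_range_succ, ih]; push_cast; ring
  have hS : ∀ n, n ≤ N → 0 ≤ ∑ i ∈ Finset.range n, c i := by
    intro n _
    have hfs := aux7_floor_sum M hM n
    have hfsR : 2 * (M : ℝ) * (∑ i ∈ Finset.range n, ((i / M : ℕ) : ℝ))
        = (n : ℝ) * n - n * M + ((n % M : ℕ) : ℝ) * ((M : ℝ) - ((n % M : ℕ) : ℝ)) := by
      have h := congrArg (fun z : ℤ => (z : ℝ)) hfs
      simp only [Int.cast_mul, Int.cast_add, Int.cast_sub, Int.cast_natCast,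
        Int.cast_ofNat, Int.cast_sum, Int.cast_two] at h
      push_cast at h ⊢
      linarith [h]
    have hr1 : (0 : ℝ) ≤ ((n % M : ℕ) : ℝ) := by positivity
    have hr2 : ((n % M : ℕ) : ℝ) ≤ (M : ℝ) := by
      exact_mod_cast (Nat.mod_lt _ hM).le
    have hsplit : ∑ i ∈ Finset.range n, c i
        = (∑ i ∈ Finset.range n, ((i / M : ℕ) : ℝ)) + n
          - (∑ i ∈ Finset.range n, ((i : ℝ) + 1)) / M - n * (((M : ℝ) - 1) / (2 * M)) := by
      simp only [hcdef]
      rw [Finset.sum_sub_distrib, Finset.sum_add_distrib, Finset.sum_add_distrib,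
        Finset.sum_const, ← Finset.sum_div, Finset.sum_const]
      simp [nsmul_eq_mul]
      ring
    rw [hsplit, hGauss]
    have key : 0 ≤ (2 * (M : ℝ))⁻¹ *
        (2 * (M : ℝ) * ((∑ i ∈ Finset.range n, ((i / M : ℕ) : ℝ)) + n
          - ((n : ℝ) * (n + 1) / 2) / M - n * (((M : ℝ) - 1) / (2 * M)))) := by
      apply mul_nonneg (by positivity)
      have expand : 2 * (M : ℝ) * ((∑ i ∈ Finset.range n, ((i / M : ℕ) : ℝ)) + n
          - ((n : ℝ) * (n + 1) / 2) / M - n * (((M : ℝ) - 1) / (2 * M)))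
          = 2 * (M : ℝ) * (∑ i ∈ Finset.range n, ((i / M : ℕ) : ℝ))
            + 2 * M * n - n * (n + 1) - n * ((M : ℝ) - 1) := by
        field_simp
      rw [expand, hfsR]
      nlinarith [mul_nonneg hr1 (sub_nonneg.2 hr2)]
    calc (0 : ℝ) ≤ _ := key
      _ = _ := by rw [inv_mul_cancel_left₀ (by positivity)]
  have habel := aux7_abel N Q c hQa hQ0 hS
  have hconv : ∑ i ∈ Finset.range N, Q i * c i = ∑ i : Fin N, q i * c (i : ℕ) := by
    rw [← Fin.sum_univ_eq_sum_range (fun n => Q n * c n) N]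
    apply Finset.sum_congr rfl
    intro i _
    simp only [hQdef, dif_pos i.2, Fin.eta]
  rw [hconv] at habel
  have hexp : ∑ i : Fin N, q i * c (i : ℕ)
      = (∑ i : Fin N, ((((i : ℕ) / M : ℕ) : ℝ) + 1) * q i)
        - (M : ℝ)⁻¹ * (∑ i : Fin N, ((i : ℝ) + 1) * q i)
        - (((M : ℝ) - 1) / (2 * M)) * (∑ i : Fin N, q i) := by
    rw [Finset.mul_sum, Finset.mul_sum, ← Finset.sum_sub_distrib, ← Finset.sum_sub_distrib]
    apply Finset.sum_congr rfl
    intro i _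
    simp only [hcdef]
    field_simp
    ring
  rw [hexp, hsum, mul_one] at habel
  have hfin : ((M : ℝ) - 1) / (2 * M) = 1 / 2 - (M : ℝ)⁻¹ * (1 / 2) := by
    field_simp
  rw [hfin] at habel
  nlinarith [habel]

private lemma aux7_V_ub (N M : ℕ) (hM : 0 < M) (q : Fin N → ℝ) (hnn : ∀ i, 0 ≤ q i)
    (hsum : ∑ i, q i = 1) :
    ∑ i : Fin N, ((((i : ℕ) / M : ℕ) : ℝ) + 1) * q i
      ≤ ((M : ℝ))⁻¹ * ((∑ i : Fin N, ((i : ℝ) + 1) * q i) - 1) + 1 := by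
  have hMR : (0 : ℝ) < (M : ℝ) := by exact_mod_cast hM
  have step1 : ∑ i : Fin N, ((((i : ℕ) / M : ℕ) : ℝ) + 1) * q i
      ≤ ∑ i : Fin N, ((i : ℝ) / M + 1) * q i := by
    apply Finset.sum_le_sum
    intro i _
    apply mul_le_mul_of_nonneg_right _ (hnn i)
    have := Nat.cast_div_le (m := (i : ℕ)) (n := M) (α := ℝ)
    linarith
  have step2 : ∑ i : Fin N, ((i : ℝ) / M + 1) * q i
      = (M : ℝ)⁻¹ * ((∑ i : Fin N, ((i : ℝ) + 1) * q i) - 1) + 1 := by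
    have : ∀ i : Fin N, ((i : ℝ) / M + 1) * q i
        = (M : ℝ)⁻¹ * (((i : ℝ) + 1) * q i) - (M : ℝ)⁻¹ * q i + q i := by
      intro i; field_simp; ring
    rw [Finset.sum_congr rfl (fun i _ => this i)]
    rw [Finset.sum_add_distrib, Finset.sum_sub_distrib, ← Finset.mul_sum, ← Finset.mul_sum,
      hsum]
    ring
  linarith

private lemma aux7_upper (N M : ℕ) (hM : 0 < M) (q : Fin N → ℝ) (f₀ : Fin N → Fin M)
    (hf₀ : ∀ i : Fin N, (f₀ i : ℕ) = (i : ℕ) % M) (m : Fin M) :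
    ∃ σ : Equiv.Perm (Fin N),
      (∑ j : Fin N, ((j : ℝ) + 1) * q (σ j) * (if f₀ (σ j) = m then 1 else 0))
        = ∑ x ∈ Finset.univ.filter (fun x : Fin N => f₀ x = m),
            ((((x : ℕ) / M : ℕ) : ℝ) + 1) * q x := by
  classical
  set mv : ℕ := (m : ℕ) with hmv
  have hmvM : mv < M := m.2
  set P : Finset (Fin N) := Finset.univ.filter (fun x : Fin N => f₀ x = m) with hP
  have hPmem : ∀ x : Fin N, x ∈ P ↔ (x : ℕ) % M = mv := by
    intro x
    simp only [hP, Finset.mem_filter, Finset.mem_univ, true_and]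
    constructor
    · intro h; rw [← hf₀ x, h]
    · intro h; apply Fin.ext; rw [hf₀ x, h]
  set T : ℕ := if mv < N then (N - 1 - mv) / M + 1 else 0 with hT
  have hmemT : ∀ t, t < T → mv + t * M < N := by
    intro t ht
    have hmvN : mv < N := by
      by_contra h; rw [hT, if_neg h] at ht; omega
    rw [hT, if_pos hmvN] at ht
    have h1 : t ≤ (N - 1 - mv) / M := by omega
    have h2 : t * M ≤ N - 1 - mv := (Nat.le_div_iff_mul_le hM).1 h1
    omega
  have hembmem : ∀ t (ht : t < T), (⟨mv + t * M, hmemT t ht⟩ : Fin N) ∈ P := by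
    intro t ht
    rw [hPmem]
    simp only
    rw [Nat.add_mul_mod_self_right]
    exact Nat.mod_eq_of_lt hmvM
  set emb : Fin T → {x // x ∈ P} :=
    fun t => ⟨⟨mv + (t : ℕ) * M, hmemT t t.2⟩, hembmem t t.2⟩ with hemb
  have hbij : Function.Bijective emb := by
    constructor
    · intro a b hab
      have h1 : mv + (a : ℕ) * M = mv + (b : ℕ) * M := by
        have := congrArg (fun x : {x // x ∈ P} => ((x : Fin N) : ℕ)) hab
        simpa [hemb] using this
      have h2 : (a : ℕ) * M = (b : ℕ) * M := by omega
      exact Fin.ext (Nat.eq_of_mul_eq_mul_right hM h2)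
    · rintro ⟨x, hx⟩
      rw [hPmem] at hx
      have hd : M * ((x : ℕ) / M) + mv = (x : ℕ) := by
        rw [← hx]; exact Nat.div_add_mod _ _
      have hmvN : mv < N := by have := x.2; omega
      have hcomm : ((x : ℕ) / M) * M = M * ((x : ℕ) / M) := Nat.mul_comm _ _
      have htT : (x : ℕ) / M < T := by
        rw [hT, if_pos hmvN]
        have h1 : ((x : ℕ) / M) * M ≤ N - 1 - mv := by
          have := x.2; omega
        have := (Nat.le_div_iff_mul_le hM).2 h1
        omega
      refine ⟨⟨(x : ℕ) / M, htT⟩, ?_⟩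
      apply Subtype.ext
      apply Fin.ext
      simp only [hemb]
      omega
  set ePart : Fin T ≃ {x // x ∈ P} := Equiv.ofBijective emb hbij with hePart
  have hPcard : P.card = T := by
    have h1 := Fintype.card_congr ePart
    simpa [Fintype.card_coe] using h1.symm
  have hTN : T ≤ N := by
    rw [← hPcard]
    simpa using Finset.card_filter_le Finset.univ (fun x : Fin N => f₀ x = m)
  have hcc : (Pᶜ : Finset (Fin N)).card = N - T := by
    rw [Finset.card_compl, hPcard]; simp
  set eCo : Fin (N - T) ≃ {x : Fin N // ¬ x ∈ P} :=
    (finCongr hcc.symm).trans ((Pᶜ).equivFin.symm.trans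
      (Equiv.subtypeEquivRight (fun x => Finset.mem_compl))) with heCo
  set σ : Equiv.Perm (Fin N) :=
    (finCongr (show N = T + (N - T) by omega)).trans
      (finSumFinEquiv.symm.trans ((Equiv.sumCongr ePart eCo).trans
        (Equiv.sumCompl (fun x : Fin N => x ∈ P)))) with hσ
  have heval1 : ∀ (j : Fin N) (hj : (j : ℕ) < T), σ j = (emb ⟨j, hj⟩ : Fin N) := by
    intro j hj
    have hcast : (finCongr (show N = T + (N - T) by omega)) j
        = Fin.castAdd (N - T) ⟨(j : ℕ), hj⟩ := by
      apply Fin.ext; simp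
    simp only [hσ, Equiv.trans_apply, hcast, finSumFinEquiv_symm_apply_castAdd,
      Equiv.sumCongr_apply, Sum.map_inl, Equiv.sumCompl_apply_inl]
    rfl
  have heval2 : ∀ (j : Fin N), ¬ ((j : ℕ) < T) → σ j ∉ P := by
    intro j hj
    have hcast : (finCongr (show N = T + (N - T) by omega)) j
        = Fin.natAdd T ⟨(j : ℕ) - T, by have := j.2; omega⟩ := by
      apply Fin.ext; simp; omega
    have : σ j = ((eCo ⟨(j : ℕ) - T, by have := j.2; omega⟩ : {x : Fin N // ¬ x ∈ P}) : Fin N) := by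
      simp only [hσ, Equiv.trans_apply, hcast, finSumFinEquiv_symm_apply_natAdd,
        Equiv.sumCongr_apply, Sum.map_inr, Equiv.sumCompl_apply_inr]
    rw [this]
    exact (eCo _).2
  refine ⟨σ, ?_⟩
  -- rewrite each term
  set Q : ℕ → ℝ := fun n => if h : n < N then q ⟨n, h⟩ else 0 with hQdef
  have hterm : ∀ j : Fin N, ((j : ℝ) + 1) * q (σ j) * (if f₀ (σ j) = m then 1 else 0)
      = if (j : ℕ) < T then (((j : ℕ) : ℝ) + 1) * Q (mv + (j : ℕ) * M) else 0 := by
    intro j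
    by_cases hj : (j : ℕ) < T
    · rw [if_pos hj, heval1 j hj]
      have hmem : ((emb ⟨(j : ℕ), hj⟩ : {x // x ∈ P}) : Fin N)
          ∈ Finset.univ.filter (fun x : Fin N => f₀ x = m) := (emb ⟨(j : ℕ), hj⟩).2
      have hone : (if f₀ ((emb ⟨(j : ℕ), hj⟩ : {x // x ∈ P}) : Fin N) = m then (1:ℝ) else 0) = 1 :=
        if_pos (Finset.mem_filter.1 hmem).2
      rw [hone, mul_one]
      have hql : q ((emb ⟨(j : ℕ), hj⟩ : {x // x ∈ P}) : Fin N) = Q (mv + (j : ℕ) * M) := by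
        simp only [hemb, hQdef, dif_pos (hmemT (j : ℕ) hj)]
      rw [hql]
    · rw [if_neg hj]
      have hnot : ¬ (σ j ∈ Finset.univ.filter (fun x : Fin N => f₀ x = m)) := heval2 j hj
      have hne : ¬ (f₀ (σ j) = m) :=
        fun heq => hnot (Finset.mem_filter.2 ⟨Finset.mem_univ _, heq⟩)
      rw [if_neg hne, mul_zero]
  rw [Finset.sum_congr rfl (fun j _ => hterm j)]
  rw [Fin.sum_univ_eq_sum_range (fun n => if n < T then ((n : ℝ) + 1) * Q (mv + n * M) else 0) N]
  rw [← Finset.sum_filter]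
  have hfilt : (Finset.range N).filter (fun n => n < T) = Finset.range T := by
    ext x
    simp only [Finset.mem_filter, Finset.mem_range]
    omega
  rw [hfilt]
  have hRHS : ∑ t ∈ Finset.range T, ((t : ℝ) + 1) * Q (mv + t * M)
      = ∑ x ∈ P, ((((x : ℕ) / M : ℕ) : ℝ) + 1) * q x := by
    rw [← Finset.sum_coe_sort P (fun x => ((((x : ℕ) / M : ℕ) : ℝ) + 1) * q x),
        ← Equiv.sum_comp ePart (fun x : {x // x ∈ P} =>
          (((((x : Fin N) : ℕ) / M : ℕ) : ℝ) + 1) * q (x : Fin N)),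
        ← Fin.sum_univ_eq_sum_range (fun n => ((n : ℝ) + 1) * Q (mv + n * M)) T]
    apply Finset.sum_congr rfl
    intro t _
    have h1 : ((ePart t : {x // x ∈ P}) : Fin N) = ⟨mv + (t : ℕ) * M, hmemT t t.2⟩ := rfl
    rw [h1]
    have h2 : (mv + (t : ℕ) * M) / M = (t : ℕ) := by
      rw [Nat.add_mul_div_right _ _ hM, Nat.div_eq_of_lt hmvM]
      omega
    simp only [h2, hQdef, dif_pos (hmemT (t : ℕ) t.2)]
  exact hRHS

theorem stmt_7 (N : ℕ) (hN : 1 ≤ N) (q : Fin N → ℝ)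
    (hnn : ∀ i, 0 ≤ q i) (hsum : ∑ i, q i = 1)
    (hsort : ∀ i j : Fin N, i ≤ j → q j ≤ q i) (k : ℕ) :
    ((2 : ℝ) ^ k)⁻¹ * (guess N q - 1 / 2) + 1 / 2 ≤ guessOptK N k q ∧
    guessOptK N k q ≤ ((2 : ℝ) ^ k)⁻¹ * (guess N q - 1) + 1 := by
  classical
  have hM : 0 < 2 ^ k := Nat.pow_pos (by norm_num)
  have hcast : ((2 : ℝ) ^ k) = ((2 ^ k : ℕ) : ℝ) := by push_cast; ring
  have hguess := aux7_guess_eq N hN q hsort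
  rw [hguess, hcast]
  unfold guessOptK
  constructor
  · -- lower bound
    apply Finset.le_inf'
    intro f _
    choose σ hmem hval using fun m : Fin (2 ^ k) =>
      Finset.exists_mem_eq_inf'
        (⟨1, Finset.mem_univ 1⟩ : (Finset.univ : Finset (Equiv.Perm (Fin N))).Nonempty)
        (fun σ : Equiv.Perm (Fin N) =>
          ∑ j : Fin N, ((j : ℝ) + 1) * q (σ j) * (if f (σ j) = m then 1 else 0))
    set W : Fin N → ℕ := fun i => (((σ (f i)).symm i : ℕ) + 1) with hW
    have hW1 : ∀ i, 1 ≤ W i := fun i => by simp [hW]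
    have hWN : ∀ i, W i ≤ N := by
      intro i
      have := ((σ (f i)).symm i).2
      simp only [hW]
      omega
    have hinj : ∀ a b, f a = f b → W a = W b → a = b := by
      intro a b hf hw
      simp only [hW, add_left_inj] at hw
      rw [hf] at hw
      have h2 : (σ (f b)).symm a = (σ (f b)).symm b := Fin.ext hw
      exact (σ (f b)).symm.injective h2
    have hEm : ∀ m : Fin (2 ^ k),
        (Finset.univ.inf' ⟨1, Finset.mem_univ 1⟩ (fun σ' : Equiv.Perm (Fin N) =>
          ∑ j : Fin N, ((j : ℝ) + 1) * q (σ' j) * (if f (σ' j) = m then 1 else 0)))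
        = ∑ i : Fin N, ((((σ m).symm i : ℕ) : ℝ) + 1) * q i * (if f i = m then 1 else 0) := by
      intro m
      rw [hval m]
      refine Eq.trans ?_ (Equiv.sum_comp (σ m)
        (fun i => ((((σ m).symm i : ℕ) : ℝ) + 1) * q i * (if f i = m then 1 else 0)))
      apply Finset.sum_congr rfl
      intro j _
      rw [Equiv.symm_apply_apply]
    have hEi : ∀ i : Fin N,
        ∑ m : Fin (2 ^ k), ((((σ m).symm i : ℕ) : ℝ) + 1) * q i * (if f i = m then 1 else 0)
          = (W i : ℝ) * q i := by
      intro i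
      rw [Finset.sum_eq_single (f i)]
      · rw [if_pos rfl, mul_one]
        simp only [hW]
        push_cast
        ring
      · intro b _ hb
        rw [if_neg (fun h => hb h.symm), mul_zero]
      · intro h; exact absurd (Finset.mem_univ _) h
    calc ((2 ^ k : ℕ) : ℝ)⁻¹ * ((∑ i : Fin N, ((i : ℝ) + 1) * q i) - 1 / 2) + 1 / 2
        ≤ ∑ i : Fin N, ((((i : ℕ) / 2 ^ k : ℕ) : ℝ) + 1) * q i :=
          aux7_V_lb N (2 ^ k) hM q hnn hsum hsort
      _ ≤ ∑ i : Fin N, (W i : ℝ) * q i :=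
          aux7_lower_core N (2 ^ k) hM q hnn hsort W hW1 hWN f hinj
      _ = ∑ i : Fin N, ∑ m : Fin (2 ^ k),
            ((((σ m).symm i : ℕ) : ℝ) + 1) * q i * (if f i = m then 1 else 0) :=
          (Finset.sum_congr rfl (fun i _ => hEi i)).symm
      _ = ∑ m : Fin (2 ^ k), ∑ i : Fin N,
            ((((σ m).symm i : ℕ) : ℝ) + 1) * q i * (if f i = m then 1 else 0) :=
          Finset.sum_comm
      _ = ∑ m : Fin (2 ^ k), Finset.univ.inf' ⟨1, Finset.mem_univ 1⟩
            (fun σ' : Equiv.Perm (Fin N) =>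
              ∑ j : Fin N, ((j : ℝ) + 1) * q (σ' j) * (if f (σ' j) = m then 1 else 0)) :=
          (Finset.sum_congr rfl (fun m _ => hEm m)).symm
  · -- upper bound
    set f₀ : Fin N → Fin (2 ^ k) := fun i => ⟨(i : ℕ) % 2 ^ k, Nat.mod_lt _ hM⟩ with hf₀def
    have hf₀ : ∀ i : Fin N, (f₀ i : ℕ) = (i : ℕ) % 2 ^ k := fun i => rfl
    have h1 : (Finset.univ.inf'
        (⟨fun _ => ⟨0, by positivity⟩, Finset.mem_univ _⟩ :
          (Finset.univ : Finset (Fin N → Fin (2 ^ k))).Nonempty)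
        (fun f : Fin N → Fin (2 ^ k) =>
          ∑ m : Fin (2 ^ k), Finset.univ.inf' ⟨1, Finset.mem_univ 1⟩
            (fun σ : Equiv.Perm (Fin N) =>
              ∑ j : Fin N, ((j : ℝ) + 1) * q (σ j) * (if f (σ j) = m then 1 else 0))))
        ≤ ∑ m : Fin (2 ^ k), Finset.univ.inf' ⟨1, Finset.mem_univ 1⟩
            (fun σ : Equiv.Perm (Fin N) =>
              ∑ j : Fin N, ((j : ℝ) + 1) * q (σ j) * (if f₀ (σ j) = m then 1 else 0)) :=
      Finset.inf'_le _ (Finset.mem_univ f₀)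
    refine le_trans h1 ?_
    have h2 : ∀ m : Fin (2 ^ k),
        Finset.univ.inf' ⟨1, Finset.mem_univ 1⟩
          (fun σ : Equiv.Perm (Fin N) =>
            ∑ j : Fin N, ((j : ℝ) + 1) * q (σ j) * (if f₀ (σ j) = m then 1 else 0))
        ≤ ∑ x ∈ Finset.univ.filter (fun x : Fin N => f₀ x = m),
            ((((x : ℕ) / 2 ^ k : ℕ) : ℝ) + 1) * q x := by
      intro m
      obtain ⟨σm, hσm⟩ := aux7_upper N (2 ^ k) hM q f₀ hf₀ m
      rw [← hσm]
      exact Finset.inf'_le _ (Finset.mem_univ σm)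
    calc ∑ m : Fin (2 ^ k), Finset.univ.inf' ⟨1, Finset.mem_univ 1⟩
          (fun σ : Equiv.Perm (Fin N) =>
            ∑ j : Fin N, ((j : ℝ) + 1) * q (σ j) * (if f₀ (σ j) = m then 1 else 0))
        ≤ ∑ m : Fin (2 ^ k), ∑ x ∈ Finset.univ.filter (fun x : Fin N => f₀ x = m),
            ((((x : ℕ) / 2 ^ k : ℕ) : ℝ) + 1) * q x :=
          Finset.sum_le_sum (fun m _ => h2 m)
      _ = ∑ x : Fin N, ((((x : ℕ) / 2 ^ k : ℕ) : ℝ) + 1) * q x :=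
          Finset.sum_fiberwise Finset.univ f₀ (fun x => ((((x : ℕ) / 2 ^ k : ℕ) : ℝ) + 1) * q x)
      _ ≤ ((2 ^ k : ℕ) : ℝ)⁻¹ * ((∑ i : Fin N, ((i : ℝ) + 1) * q i) - 1) + 1 :=
          aux7_V_ub N (2 ^ k) hM q hnn hsum
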